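/- Let p ≥ 3, s ≥ 1, and 1 ≤ e ≤ p − 1 be integers. Let v_0, …, v_{s−1} be integers with |v_j| ≤ e for all j, and suppose there exists some index j₀ with |v_{j₀}| ≤ e − 1. If ∑_{j=0}^{s−1} v_j p^j ≡ 0 (mod p^s − 1), then v_j = 0 for all j. -/
import Mathlib

lemma aux_digits (p : ℤ) (hp : 1 < p) :
    ∀ (s : ℕ) (v : ℕ → ℤ), (∀ j < s, |v j| < p) →
      (∑ j ∈ Finset.range s, v j * p ^ j = 0) → ∀ j < s, v j = 0 := by
  intro s
  induction s with
  | zero => intro v _ _ j hj; omega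
  | succ n ih =>
    intro v hb hsum j hj
    rw [Finset.sum_range_succ'] at hsum
    have h0 : v 0 = 0 := by
      have hdvd : p ∣ v 0 := by
        have : p ∣ ∑ j ∈ Finset.range n, v (j + 1) * p ^ (j + 1) :=
          Finset.dvd_sum (fun i _ => by
            exact Dvd.dvd.mul_left (dvd_pow_self p (Nat.succ_ne_zero i)) _)
        have h := hsum
        simp only [pow_zero, mul_one] at h
        have heq : v 0 = -(∑ j ∈ Finset.range n, v (j + 1) * p ^ (j + 1)) := by linarith
        rw [heq]
        exact dvd_neg.mpr this
      exact Int.eq_zero_of_abs_lt_dvd hdvd (hb 0 (by omega))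
    have hsum2 : ∑ j ∈ Finset.range n, v (j + 1) * p ^ j = 0 := by
      have hfac : ∑ j ∈ Finset.range n, v (j + 1) * p ^ (j + 1)
          = (∑ j ∈ Finset.range n, v (j + 1) * p ^ j) * p := by
        rw [Finset.sum_mul]
        exact Finset.sum_congr rfl (fun i _ => by ring)
      rw [hfac, h0] at hsum
      simp at hsum
      rcases hsum with h | h
      · exact h
      · omega
    have hrec := ih (fun j => v (j + 1)) (fun j hj => hb (j + 1) (by omega)) hsum2
    rcases Nat.eq_zero_or_pos j with h | h
    · rw [h]; exact h0
    · have := hrec (j - 1) (by omega)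
      simpa [Nat.sub_add_cancel h] using this

theorem stmt_5 (p e : ℤ) (s : ℕ) (hp : 3 ≤ p) (hs : 1 ≤ s) (he : 1 ≤ e) (hep : e ≤ p - 1)
    (v : ℕ → ℤ) (hv : ∀ j < s, |v j| ≤ e)
    (hj0 : ∃ j₀ < s, |v j₀| ≤ e - 1)
    (hsum : (p ^ s - 1) ∣ ∑ j ∈ Finset.range s, v j * p ^ j) :
    ∀ j < s, v j = 0 := by
  obtain ⟨j₀, hj₀s, hj₀⟩ := hj0
  have hp1 : (1 : ℤ) < p := by omega
  have hppos : (0 : ℤ) < p := by omega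
  -- bound the sum
  have hgeom : (∑ j ∈ Finset.range s, p ^ j) * (p - 1) = p ^ s - 1 := geom_sum_mul p s
  have habs : |∑ j ∈ Finset.range s, v j * p ^ j| ≤ ∑ j ∈ Finset.range s, |v j| * p ^ j := by
    refine (Finset.abs_sum_le_sum_abs _ _).trans ?_
    refine le_of_eq (Finset.sum_congr rfl (fun i hi => ?_))
    rw [abs_mul, abs_pow, abs_of_pos hppos]
  have hstep : ∑ j ∈ Finset.range s, |v j| * p ^ j
      ≤ (∑ j ∈ Finset.range s, e * p ^ j) - p ^ j₀ := by
    have key : p ^ j₀ ≤ ∑ j ∈ Finset.range s, (e - |v j|) * p ^ j := by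
      have hle : ∀ i ∈ Finset.range s, (0 : ℤ) ≤ (e - |v i|) * p ^ i := fun i hi => by
        have := hv i (Finset.mem_range.mp hi)
        exact mul_nonneg (by omega) (pow_nonneg (by omega) i)
      have hterm : p ^ j₀ ≤ (e - |v j₀|) * p ^ j₀ := by
        have h1 : (1 : ℤ) ≤ e - |v j₀| := by omega
        nlinarith [pow_pos hppos j₀]
      calc p ^ j₀ ≤ (e - |v j₀|) * p ^ j₀ := hterm
        _ ≤ _ := Finset.single_le_sum hle (Finset.mem_range.mpr hj₀s)
    have : ∑ j ∈ Finset.range s, (e - |v j|) * p ^ j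
        = (∑ j ∈ Finset.range s, e * p ^ j) - ∑ j ∈ Finset.range s, |v j| * p ^ j := by
      rw [← Finset.sum_sub_distrib]
      exact Finset.sum_congr rfl (fun i _ => by ring)
    omega
  have hsum_e : ∑ j ∈ Finset.range s, e * p ^ j ≤ p ^ s - 1 := by
    rw [← hgeom, ← Finset.mul_sum]
    have hgeomnn : (0 : ℤ) ≤ ∑ j ∈ Finset.range s, p ^ j :=
      Finset.sum_nonneg (fun i _ => pow_nonneg (by omega) i)
    nlinarith
  have hj₀pos : (0 : ℤ) < p ^ j₀ := pow_pos hppos j₀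
  have hlt : |∑ j ∈ Finset.range s, v j * p ^ j| < p ^ s - 1 := by omega
  have hzero : ∑ j ∈ Finset.range s, v j * p ^ j = 0 :=
    Int.eq_zero_of_abs_lt_dvd hsum hlt
  exact aux_digits p hp1 s v (fun j hj => lt_of_le_of_lt (hv j hj) (by omega)) hzero
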